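/- Let k > 0, K = [[0, 1], [−k², −2k]], Z = [[0,0,0],[0,2k,1]], κ = (0, k²)ᵀ, H_ε = [[0,1],[−1,−2]], and let P_ε = [[3/2, 1/2], [1/2, 1/2]] (the positive definite solution of H_εᵀP_ε + P_εH_ε = −I). Let ϵ : ℝ → ℝ², ζ̃_p : ℝ → ℝ³ continuous, n : ℝ → ℝ continuous, T ∈ ℝ, D ≥ 0, r_n ≥ 0 with ‖ζ̃_p(t)‖ ≤ D and |n(t)| ≤ r_n for all t ≥ T, and suppose ϵ'(t) = K·ϵ(t) + Z·ζ̃_p(t) + κ·n(t) for all t. Then for every ν ∈ (0,1): limsup_{t→∞} ‖ϵ(t)‖ ≤ max{k^{−1}, 1} · √(λ_max(P_ε)/λ_min(P_ε)) · (2·λ_max(P_ε))/(ν·k) · (‖Z‖·D + k²·r_n), where ‖Z‖ denotes the operator norm of Z. -/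

import Mathlib

open Matrix Filter

noncomputable section

set_option synthInstance.maxHeartbeats 1000000
set_option maxHeartbeats 1000000

/-- Closed-loop control-error system matrix `K = [[0,1],[−k²,−2k]]`. -/
def Kmat (k : ℝ) : Matrix (Fin 2) (Fin 2) ℝ := !![0, 1; -k ^ 2, -2 * k]

/-- Input matrix `Z = [[0,0,0],[0,2k,1]]` for the observation error. -/
def Zmat (k : ℝ) : Matrix (Fin 2) (Fin 3) ℝ := !![0, 0, 0; 0, 2 * k, 1]

/-- Noise input vector `κ = (0,k²)ᵀ` as an element of Euclidean space. -/
def kappa (k : ℝ) : EuclideanSpace ℝ (Fin 2) :=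
  (EuclideanSpace.equiv (Fin 2) ℝ).symm ![0, k ^ 2]

/-- `P_ε = [[3/2,1/2],[1/2,1/2]]`, the positive definite solution of
`H_εᵀ P_ε + P_ε H_ε = −I`. -/
def Peps : Matrix (Fin 2) (Fin 2) ℝ := !![3/2, 1/2; 1/2, 1/2]
def Nmat (k : ℝ) : Matrix (Fin 2) (Fin 2) ℝ := !![k, 1; -k ^ 2, -k]

abbrev E2 := EuclideanSpace ℝ (Fin 2)

def Ncl (k : ℝ) : E2 →L[ℝ] E2 := Matrix.toEuclideanCLM (𝕜 := ℝ) (Nmat k)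
def Acl (k : ℝ) : E2 →L[ℝ] E2 := Matrix.toEuclideanCLM (𝕜 := ℝ) (Kmat k)

lemma Nmat_sq (k : ℝ) : Nmat k * Nmat k = 0 := by
  ext i j; fin_cases i <;> fin_cases j <;>
    simp [Nmat, Matrix.mul_apply, Fin.sum_univ_succ] <;> ring

lemma Kmat_eq (k : ℝ) : Kmat k = (-k) • (1 : Matrix (Fin 2) (Fin 2) ℝ) + Nmat k := by
  ext i j; fin_cases i <;> fin_cases j <;> simp [Kmat, Nmat] <;> ring

lemma Ncl_sq_apply (k : ℝ) (v : E2) : Ncl k (Ncl k v) = 0 := by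
  rw [← ContinuousLinearMap.mul_apply, Ncl, ← _root_.map_mul, Nmat_sq, _root_.map_zero,
    ContinuousLinearMap.zero_apply]

lemma Acl_apply (k : ℝ) (v : E2) : Acl k v = (-k) • v + Ncl k v := by
  rw [Acl, Kmat_eq, _root_.map_add, _root_.map_smul, _root_.map_one]
  simp [Ncl]

/-- fundamental solution `Φ τ = e^{-kτ}(1 + τ N)` -/
def Phi (k τ : ℝ) : E2 →L[ℝ] E2 :=
  Real.exp (-(k * τ)) • ((1 : E2 →L[ℝ] E2) + τ • Ncl k)

lemma Phi_apply (k τ : ℝ) (v : E2) :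
    Phi k τ v = Real.exp (-(k * τ)) • (v + τ • Ncl k v) := by
  simp [Phi]

lemma Phi_zero (k : ℝ) : Phi k 0 = 1 := by
  ext1 v; rw [Phi_apply]; simp

lemma Phi_mul_apply (k a b : ℝ) (v : E2) : Phi k a (Phi k b v) = Phi k (a + b) v := by
  simp only [Phi_apply, _root_.map_smul, map_add, Ncl_sq_apply, smul_smul, smul_zero,
    add_zero, smul_add, add_smul]
  rw [show Real.exp (-(k*(a+b))) = Real.exp (-(k*a)) * Real.exp (-(k*b)) by
    rw [← Real.exp_add]; ring_nf]
  module

lemma hasDerivAt_Phi (k τ : ℝ) :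
    HasDerivAt (Phi k) (Real.exp (-(k * τ)) • Ncl k
      + (-k * Real.exp (-(k * τ))) • ((1 : E2 →L[ℝ] E2) + τ • Ncl k)) τ := by
  have h1 : HasDerivAt (fun τ : ℝ => Real.exp (-(k * τ))) (-k * Real.exp (-(k * τ))) τ := by
    have hinner : HasDerivAt (fun τ : ℝ => -(k * τ)) (-k) τ := by
      have := ((hasDerivAt_id' τ).const_mul k).neg; simp only [mul_one] at this; exact this
    have := (Real.hasDerivAt_exp (-(k * τ))).comp τ hinner
    rw [show -k * Real.exp (-(k * τ)) = Real.exp (-(k * τ)) * -k by ring]; exact this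
  have h2 : HasDerivAt (fun τ : ℝ => (1 : E2 →L[ℝ] E2) + τ • Ncl k) (Ncl k) τ := by
    simpa using (((hasDerivAt_id τ).smul_const (Ncl k)).const_add (1 : E2 →L[ℝ] E2))
  exact h1.smul h2

lemma Phi_deriv_apply (k τ : ℝ) (v : E2) :
    (Real.exp (-(k * τ)) • Ncl k
      + (-k * Real.exp (-(k * τ))) • ((1 : E2 →L[ℝ] E2) + τ • Ncl k)) v
      = Acl k (Phi k τ v) := by
  simp only [ContinuousLinearMap.add_apply, ContinuousLinearMap.smul_apply,
    ContinuousLinearMap.one_apply, Phi_apply, Acl_apply, map_add, _root_.map_smul,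
    Ncl_sq_apply, smul_add, smul_smul, smul_zero]
  module

lemma Phi_Acl_apply (k τ : ℝ) (v : E2) : Phi k τ (Acl k v) = Acl k (Phi k τ v) := by
  simp only [Phi_apply, Acl_apply, map_add, _root_.map_smul, Ncl_sq_apply, smul_add,
    smul_smul, smul_zero, add_zero]
  module

lemma coord_le_norm (v : E2) (i : Fin 2) : |v i| ≤ ‖v‖ := by
  rw [EuclideanSpace.norm_eq]
  rw [show |v i| = Real.sqrt (‖v i‖^2) by rw [Real.sqrt_sq_eq_abs]; simp]
  apply Real.sqrt_le_sqrt
  exact Finset.single_le_sum (f := fun j => ‖v j‖^2) (fun j _ => sq_nonneg _) (Finset.mem_univ i)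

lemma Ncl_apply_eq (k : ℝ) (v : E2) (hv : v 0 = 0) :
    Ncl k v = v 1 • (WithLp.equiv 2 (Fin 2 → ℝ)).symm ![1, -k] := by
  apply (WithLp.equiv 2 (Fin 2 → ℝ)).injective
  rw [show ∀ (c : ℝ) (x : E2), WithLp.equiv 2 (Fin 2 → ℝ) (c • x) = c • WithLp.equiv 2 (Fin 2 → ℝ) x from fun _ _ => rfl]
  funext i
  have : (WithLp.equiv 2 (Fin 2 → ℝ)) (Ncl k v) = Matrix.toLin' (Nmat k) ((WithLp.equiv 2 (Fin 2 → ℝ)) v) := by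
    rw [Ncl]; exact Matrix.ofLp_toEuclideanCLM (Nmat k) v
  rw [this]
  have hv0 : (WithLp.equiv 2 (Fin 2 → ℝ)) v 0 = 0 := hv
  fin_cases i <;>
    simp [Matrix.toLin'_apply, Matrix.mulVec, dotProduct, Fin.sum_univ_succ, Nmat, hv] <;>
    ring_nf

lemma norm_Ncl_apply_le (k : ℝ) (v : E2) (hv : v 0 = 0) :
    ‖Ncl k v‖ ≤ Real.sqrt (1 + k ^ 2) * ‖v‖ := by
  rw [Ncl_apply_eq k v hv, norm_smul]
  have hw : ‖(WithLp.equiv 2 (Fin 2 → ℝ)).symm ![1, -k]‖ = Real.sqrt (1 + k ^ 2) := by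
    rw [EuclideanSpace.norm_eq]
    congr 1
    simp [Fin.sum_univ_succ, sq_abs]
  rw [hw, mul_comm]
  have := coord_le_norm v 1
  have h0 : (0:ℝ) ≤ Real.sqrt (1 + k ^ 2) := Real.sqrt_nonneg _
  exact mul_le_mul_of_nonneg_left (by simpa using this) h0

lemma norm_Phi_apply_le (k : ℝ) (hk : 0 < k) (τ : ℝ) (hτ : 0 ≤ τ) (v : E2) (hv : v 0 = 0) :
    ‖Phi k τ v‖ ≤ Real.exp (-(k * τ)) * ((1 + Real.sqrt (1 + k ^ 2) * τ) * ‖v‖) := by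
  rw [Phi_apply, norm_smul, Real.norm_eq_abs, abs_of_nonneg (Real.exp_nonneg _)]
  apply mul_le_mul_of_nonneg_left _ (Real.exp_nonneg _)
  calc ‖v + τ • Ncl k v‖ ≤ ‖v‖ + ‖τ • Ncl k v‖ := norm_add_le _ _
    _ ≤ ‖v‖ + τ * (Real.sqrt (1 + k ^ 2) * ‖v‖) := by
        rw [norm_smul, Real.norm_eq_abs, abs_of_nonneg hτ]
        exact add_le_add_right (mul_le_mul_of_nonneg_left (norm_Ncl_apply_le k v hv) hτ) _
    _ = (1 + Real.sqrt (1 + k ^ 2) * τ) * ‖v‖ := by ring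

lemma norm_Phi_apply_le' (k : ℝ) (τ : ℝ) (hτ : 0 ≤ τ) (v : E2) :
    ‖Phi k τ v‖ ≤ Real.exp (-(k * τ)) * (‖v‖ + τ * (‖Ncl k v‖)) := by
  rw [Phi_apply, norm_smul, Real.norm_eq_abs, abs_of_nonneg (Real.exp_nonneg _)]
  apply mul_le_mul_of_nonneg_left _ (Real.exp_nonneg _)
  calc ‖v + τ • Ncl k v‖ ≤ ‖v‖ + ‖τ • Ncl k v‖ := norm_add_le _ _
    _ ≤ ‖v‖ + τ * ‖Ncl k v‖ := by rw [norm_smul, Real.norm_eq_abs, abs_of_nonneg hτ]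

lemma phi_g_cont (k : ℝ) {g : ℝ → E2} (hg : Continuous g) (f h : ℝ → ℝ)
    (hf : Continuous f) (hh : Continuous h) :
    Continuous fun s : ℝ => Phi k (f s) (g (h s)) := by
  simp only [Phi_apply]
  exact ((Real.continuous_exp.comp (by fun_prop)).smul
    ((hg.comp hh).add (hf.smul ((Ncl k).continuous.comp (hg.comp hh)))))

lemma sol_repr (k : ℝ) (ϵ : ℝ → E2) (g : ℝ → E2) (hg : Continuous g)
    (hd : ∀ t, HasDerivAt ϵ (Acl k (ϵ t) + g t) t) (T t : ℝ) :
    ϵ t = Phi k (t - T) (ϵ T) + ∫ s in T..t, Phi k (t - s) (g s) := by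
  -- derivative of u s = Phi k (-s) (ϵ s)
  have hu : ∀ s : ℝ, HasDerivAt (fun y => Phi k (-y) (ϵ y)) (Phi k (-s) (g s)) s := by
    intro s
    have hc : HasDerivAt (fun y : ℝ => Phi k (-y))
        ((-1 : ℝ) • (Real.exp (-(k * -s)) • Ncl k
          + (-k * Real.exp (-(k * -s))) • ((1 : E2 →L[ℝ] E2) + (-s) • Ncl k))) s :=
      (hasDerivAt_Phi k (-s)).scomp s (hasDerivAt_neg s)
    have := hc.clm_apply (hd s)
    refine this.congr_deriv ?_
    rw [ContinuousLinearMap.smul_apply, Phi_deriv_apply, map_add, Phi_Acl_apply]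
    simp
  have hcont : Continuous fun s : ℝ => Phi k (-s) (g s) :=
    phi_g_cont k hg (fun s => -s) id continuous_neg continuous_id
  have hftc : ∫ s in T..t, Phi k (-s) (g s)
      = Phi k (-t) (ϵ t) - Phi k (-T) (ϵ T) :=
    intervalIntegral.integral_eq_sub_of_hasDerivAt (fun s _ => hu s)
      (hcont.intervalIntegrable _ _)
  have hrec : Phi k (-t) (ϵ t) = Phi k (-T) (ϵ T) + ∫ s in T..t, Phi k (-s) (g s) := by
    rw [hftc]; abel
  have happ := congrArg (Phi k t) hrec
  rw [Phi_mul_apply, add_neg_cancel, Phi_zero, ContinuousLinearMap.one_apply] at happ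
  rw [happ, _root_.map_add, Phi_mul_apply,
    ← (Phi k t).intervalIntegral_comp_comm (hcont.intervalIntegrable _ _)]
  rw [sub_eq_add_neg t T]
  congr 1
  exact intervalIntegral.integral_congr fun s _ => by rw [Phi_mul_apply, ← sub_eq_add_neg]

lemma scalar_int_bound (k c T t : ℝ) (hk : 0 < k) (hc : 0 ≤ c) (hT : T ≤ t) :
    ∫ s in T..t, Real.exp (-(k * (t - s))) * (1 + c * (t - s))
      ≤ 1 / k + c / k ^ 2 := by
  set F : ℝ → ℝ := fun s => Real.exp (-(k * (t - s))) * (1 / k + c * (t - s) / k + c / k ^ 2)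
    with hF
  have hFd : ∀ s : ℝ, HasDerivAt F (Real.exp (-(k * (t - s))) * (1 + c * (t - s))) s := by
    intro s
    have h1 : HasDerivAt (fun s : ℝ => -(k * (t - s))) k s := by
      have : (fun s : ℝ => -(k * (t - s))) = fun s : ℝ => k * s - k * t := by
        funext s; ring
      rw [this]
      simpa using ((hasDerivAt_id s).const_mul k).sub_const (k * t)
    have hexp : HasDerivAt (fun s : ℝ => Real.exp (-(k * (t - s))))
        (Real.exp (-(k * (t - s))) * k) s := by
      have := (Real.hasDerivAt_exp (-(k * (t - s)))).comp s h1; exact this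
    have h2 : HasDerivAt (fun s : ℝ => 1 / k + c * (t - s) / k + c / k ^ 2) (-(c / k)) s := by
      have : (fun s : ℝ => 1 / k + c * (t - s) / k + c / k ^ 2)
          = fun s : ℝ => (-(c / k)) * s + (1 / k + c * t / k + c / k ^ 2) := by
        funext s; ring
      rw [this]
      simpa using ((hasDerivAt_id s).const_mul (-(c / k))).add_const (1 / k + c * t / k + c / k ^ 2)
    have := hexp.mul h2
    refine this.congr_deriv ?_
    field_simp
    ring
  have hci : Continuous fun s : ℝ => Real.exp (-(k * (t - s))) * (1 + c * (t - s)) := by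
    fun_prop
  have hint := intervalIntegral.integral_eq_sub_of_hasDerivAt (a := T) (b := t)
    (fun s _ => hFd s) (hci.intervalIntegrable T t)
  rw [hint]
  have hFt : F t = 1 / k + c / k ^ 2 := by
    simp [hF]
  have hFT : 0 ≤ F T := by
    apply mul_nonneg (Real.exp_nonneg _)
    have h1 : 0 ≤ c * (t - T) / k := div_nonneg (mul_nonneg hc (by linarith)) hk.le
    have h2 : 0 ≤ 1 / k := by positivity
    have h3 : 0 ≤ c / k ^ 2 := by positivity
    linarith
  rw [hFt]
  linarith

lemma tendsto_aux (k C1 C2 : ℝ) (hk : 0 < k) :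
    Tendsto (fun τ : ℝ => Real.exp (-(k * τ)) * (C1 + τ * C2)) atTop (nhds 0) := by
  have hkt : Tendsto (fun τ : ℝ => k * τ) atTop atTop :=
    Tendsto.const_mul_atTop hk tendsto_id
  have h1 : Tendsto (fun τ : ℝ => Real.exp (-(k * τ))) atTop (nhds 0) :=
    (Real.tendsto_exp_neg_atTop_nhds_zero).comp hkt
  have h2 : Tendsto (fun τ : ℝ => (k * τ) ^ 1 * Real.exp (-(k * τ))) atTop (nhds 0) :=
    (Real.tendsto_pow_mul_exp_neg_atTop_nhds_zero 1).comp hkt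
  have h3 : Tendsto (fun τ : ℝ => C1 * Real.exp (-(k * τ))
      + (C2 / k) * ((k * τ) ^ 1 * Real.exp (-(k * τ)))) atTop (nhds 0) := by
    have := (h1.const_mul C1).add (h2.const_mul (C2 / k))
    simpa using this
  convert h3 using 2 with τ
  field_simp

lemma traj_limsup (k : ℝ) (hk : 0 < k) (ϵ : ℝ → E2) (g : ℝ → E2) (hg : Continuous g)
    (hd : ∀ t, HasDerivAt ϵ (Acl k (ϵ t) + g t) t) (T M : ℝ) (hM : 0 ≤ M)
    (hgM : ∀ s, T ≤ s → ‖g s‖ ≤ M) (hg0 : ∀ s, g s 0 = 0) :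
    limsup (fun t : ℝ => ‖ϵ t‖) atTop
      ≤ M * (1 / k + Real.sqrt (1 + k ^ 2) / k ^ 2) := by
  set c : ℝ := Real.sqrt (1 + k ^ 2) with hcdef
  have hc : 0 ≤ c := Real.sqrt_nonneg _
  set B : ℝ := M * (1 / k + c / k ^ 2) with hBdef
  set C1 : ℝ := ‖ϵ T‖
  set C2 : ℝ := ‖Ncl k (ϵ T)‖
  have hbd : ∀ t, T ≤ t →
      ‖ϵ t‖ ≤ Real.exp (-(k * (t - T))) * (C1 + (t - T) * C2) + B := by
    intro t ht
    rw [sol_repr k ϵ g hg hd T t]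
    refine (norm_add_le _ _).trans (add_le_add ?_ ?_)
    · exact norm_Phi_apply_le' k (t - T) (by linarith) (ϵ T)
    · have hlhs_cont : Continuous fun s : ℝ => ‖Phi k (t - s) (g s)‖ :=
        (phi_g_cont k hg (fun s => t - s) id (by fun_prop) continuous_id).norm
      have hrhs_cont : Continuous fun s : ℝ =>
          M * (Real.exp (-(k * (t - s))) * (1 + c * (t - s))) := by fun_prop
      calc ‖∫ s in T..t, Phi k (t - s) (g s)‖
          ≤ ∫ s in T..t, ‖Phi k (t - s) (g s)‖ :=
            intervalIntegral.norm_integral_le_integral_norm ht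
        _ ≤ ∫ s in T..t, M * (Real.exp (-(k * (t - s))) * (1 + c * (t - s))) := by
            apply intervalIntegral.integral_mono_on ht
              (hlhs_cont.intervalIntegrable T t) (hrhs_cont.intervalIntegrable T t)
            intro s hs
            have hτ : 0 ≤ t - s := by linarith [hs.2]
            have h1 := norm_Phi_apply_le k hk (t - s) hτ (g s) (hg0 s)
            refine h1.trans ?_
            rw [mul_comm M, mul_assoc]
            apply mul_le_mul_of_nonneg_left _ (Real.exp_nonneg _)
            exact mul_le_mul_of_nonneg_left (hgM s hs.1) (by nlinarith)
        _ = M * ∫ s in T..t, Real.exp (-(k * (t - s))) * (1 + c * (t - s)) := by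
            rw [← intervalIntegral.integral_const_mul]
        _ ≤ B := mul_le_mul_of_nonneg_left (scalar_int_bound k c T t hk hc ht) hM
  have htend : Tendsto (fun t : ℝ => Real.exp (-(k * (t - T))) * (C1 + (t - T) * C2) + B)
      atTop (nhds (0 + B)) := by
    apply Tendsto.add_const
    have hsub : Tendsto (fun t : ℝ => t - T) atTop atTop :=
      tendsto_atTop_add_const_right atTop (-T) tendsto_id
    exact (tendsto_aux k C1 C2 hk).comp hsub
  have hev : ∀ᶠ t in atTop, ‖ϵ t‖
      ≤ Real.exp (-(k * (t - T))) * (C1 + (t - T) * C2) + B :=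
    (eventually_ge_atTop T).mono hbd
  have hlim := limsup_le_limsup hev
    (Filter.isCoboundedUnder_le_of_eventually_le atTop (x := 0)
      (Eventually.of_forall fun t => norm_nonneg _))
    (htend.isBoundedUnder_le)
  rw [htend.limsup_eq] at hlim
  simpa using hlim


lemma Peps_det : Peps.det = 1/2 := by
  simp [Peps, Matrix.det_fin_two_of]; norm_num

lemma eig_quad (hP : Peps.IsHermitian) (i : Fin 2) :
    (hP.eigenvalues i) ^ 2 - 2 * (hP.eigenvalues i) + 1/2 = 0 := by
  have h := hP.eigenvalues_mem_spectrum_real i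
  rw [spectrum.mem_iff] at h
  set μ := hP.eigenvalues i
  have hd : (algebraMap ℝ (Matrix (Fin 2) (Fin 2) ℝ) μ - Peps).det = 0 := by
    by_contra hne
    exact h ((Matrix.isUnit_iff_isUnit_det _).2 (isUnit_iff_ne_zero.2 hne))
  have heq : (algebraMap ℝ (Matrix (Fin 2) (Fin 2) ℝ) μ - Peps)
      = !![μ - 3/2, -(1/2); -(1/2), μ - 1/2] := by
    ext i j; fin_cases i <;> fin_cases j <;>
      simp [Peps, Matrix.algebraMap_matrix_apply]
  rw [heq, Matrix.det_fin_two_of] at hd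
  nlinarith [hd]

lemma eig_prod (hP : Peps.IsHermitian) :
    (hP.eigenvalues 0) * (hP.eigenvalues 1) = 1/2 := by
  have h := hP.det_eq_prod_eigenvalues
  rw [Peps_det] at h
  simp [Fin.prod_univ_succ] at h
  linarith

lemma iSup_fin2 (f : Fin 2 → ℝ) : (⨆ i, f i) = max (f 0) (f 1) := by
  apply le_antisymm
  · exact ciSup_le fun i => by fin_cases i <;> simp [le_max_left, le_max_right]
  · exact max_le (le_ciSup (Set.Finite.bddAbove (Set.finite_range f)) 0)
      (le_ciSup (Set.Finite.bddAbove (Set.finite_range f)) 1)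

lemma iInf_fin2 (f : Fin 2 → ℝ) : (⨅ i, f i) = min (f 0) (f 1) := by
  apply le_antisymm
  · exact le_min (ciInf_le (Set.Finite.bddBelow (Set.finite_range f)) 0)
      (ciInf_le (Set.Finite.bddBelow (Set.finite_range f)) 1)
  · exact le_ciInf fun i => by fin_cases i <;> simp [min_le_left, min_le_right]

lemma eig_facts (hP : Peps.IsHermitian) :
    3/2 ≤ (⨆ i, hP.eigenvalues i) ∧ 0 < (⨅ i, hP.eigenvalues i) ∧
      (⨅ i, hP.eigenvalues i) ≤ (⨆ i, hP.eigenvalues i) := by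
  have hx := eig_quad hP 0
  have hy := eig_quad hP 1
  have hxy := eig_prod hP
  set x := hP.eigenvalues 0
  set y := hP.eigenvalues 1
  have hx0 : 0 < x := by nlinarith [sq_nonneg x]
  have hy0 : 0 < y := by nlinarith [sq_nonneg y]
  rw [iSup_fin2, iInf_fin2]
  refine ⟨?_, lt_min hx0 hy0, min_le_max⟩
  rcases le_total x y with h | h
  · rw [max_eq_right h]
    nlinarith [mul_le_mul_of_nonneg_right h hy0.le]
  · rw [max_eq_left h]
    nlinarith [mul_le_mul_of_nonneg_right h hx0.le]


lemma Zlin_zero (k : ℝ) (ζ : EuclideanSpace ℝ (Fin 3)) :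
    (Matrix.toEuclideanLin (Zmat k) ζ) 0 = 0 := by
  simp [Matrix.toEuclideanLin_apply, Matrix.mulVec, dotProduct,
    Fin.sum_univ_succ, Zmat]

lemma kappa_zero (k : ℝ) : kappa k 0 = 0 := by
  simp [kappa]

lemma kappa_norm (k : ℝ) : ‖kappa k‖ = k ^ 2 := by
  rw [EuclideanSpace.norm_eq]
  rw [show ∑ i, ‖kappa k i‖ ^ 2 = (k^2)^2 by
    simp [kappa, Fin.sum_univ_succ, sq_abs]]
  exact Real.sqrt_sq (sq_nonneg k)

lemma Acl_eq_lin (k : ℝ) (v : E2) : Matrix.toEuclideanLin (Kmat k) v = Acl k v := rfl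

/-- quantitative ultimate bound for the closed-loop control error
`ϵ = (e, e')ᵀ` obeying `ϵ' = Kϵ + Zζ̃_p + κn`, with `‖ζ̃_p(t)‖ ≤ D` and `|n(t)| ≤ r_n`
for `t ≥ T`:  for every `ν ∈ (0,1)`,
`limsup ‖ϵ‖ ≤ max{k⁻¹,1} √(λmax(P_ε)/λmin(P_ε)) (2λmax(P_ε)/(νk)) (‖Z‖D + k²r_n)`. -/
theorem control_error_ultimate_bound
    (k : ℝ) (hk : 0 < k) (hP : Peps.IsHermitian)
    (ϵ : ℝ → EuclideanSpace ℝ (Fin 2)) (ζp : ℝ → EuclideanSpace ℝ (Fin 3))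
    (n : ℝ → ℝ) (hζc : Continuous ζp) (hnc : Continuous n)
    (T D rn : ℝ) (hD : 0 ≤ D) (hrn : 0 ≤ rn)
    (hζb : ∀ t : ℝ, T ≤ t → ‖ζp t‖ ≤ D)
    (hnb : ∀ t : ℝ, T ≤ t → |n t| ≤ rn)
    (hdyn : ∀ t : ℝ, HasDerivAt ϵ
      (Matrix.toEuclideanLin (Kmat k) (ϵ t) + Matrix.toEuclideanLin (Zmat k) (ζp t)
        + n t • kappa k) t)
    (ν : ℝ) (hν : ν ∈ Set.Ioo (0 : ℝ) 1) :
    limsup (fun t : ℝ => ‖ϵ t‖) atTop ≤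
      max k⁻¹ 1 *
        Real.sqrt ((⨆ i, hP.eigenvalues i) / (⨅ i, hP.eigenvalues i)) *
        (2 * (⨆ i, hP.eigenvalues i) / (ν * k)) *
        (‖LinearMap.toContinuousLinearMap (Matrix.toEuclideanLin (Zmat k))‖ * D
          + k ^ 2 * rn) := by
  obtain ⟨hν0, hν1⟩ := hν
  set Zcl : EuclideanSpace ℝ (Fin 3) →L[ℝ] E2 :=
    LinearMap.toContinuousLinearMap (Matrix.toEuclideanLin (Zmat k)) with hZcl
  set g : ℝ → E2 := fun t => Zcl (ζp t) + n t • kappa k with hgdef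
  set M : ℝ := ‖Zcl‖ * D + k ^ 2 * rn with hMdef
  have hM : 0 ≤ M := add_nonneg (mul_nonneg (norm_nonneg _) hD)
    (mul_nonneg (sq_nonneg k) hrn)
  have hg : Continuous g := (Zcl.continuous.comp hζc).add (hnc.smul continuous_const)
  have hd : ∀ t, HasDerivAt ϵ (Acl k (ϵ t) + g t) t := by
    intro t
    have : Acl k (ϵ t) + g t
        = Matrix.toEuclideanLin (Kmat k) (ϵ t) + Matrix.toEuclideanLin (Zmat k) (ζp t)
          + n t • kappa k := by
      rw [← Acl_eq_lin, hgdef]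
      simp only [hZcl, LinearMap.coe_toContinuousLinearMap']
      abel
    rw [this]
    exact hdyn t
  have hgM : ∀ s, T ≤ s → ‖g s‖ ≤ M := by
    intro s hs
    calc ‖g s‖ ≤ ‖Zcl (ζp s)‖ + ‖n s • kappa k‖ := norm_add_le _ _
      _ ≤ ‖Zcl‖ * ‖ζp s‖ + |n s| * ‖kappa k‖ := by
          rw [norm_smul, Real.norm_eq_abs]
          exact add_le_add_left (Zcl.le_opNorm _) _
      _ ≤ ‖Zcl‖ * D + rn * k ^ 2 := by
          apply add_le_add
          · exact mul_le_mul_of_nonneg_left (hζb s hs) (norm_nonneg _)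
          · rw [kappa_norm]
            exact mul_le_mul_of_nonneg_right (hnb s hs) (sq_nonneg k)
      _ = M := by rw [hMdef]; ring
  have hg0 : ∀ s, g s 0 = 0 := by
    intro s
    have h1 : (Zcl (ζp s)) 0 = 0 := Zlin_zero k (ζp s)
    have h2 : (n s • kappa k) 0 = n s * kappa k 0 := rfl
    have : g s 0 = (Zcl (ζp s)) 0 + (n s • kappa k) 0 := rfl
    rw [this, h1, h2, kappa_zero]
    ring
  have hmain := traj_limsup k hk ϵ g hg hd T M hM hgM hg0
  refine hmain.trans ?_
  -- numeric comparison
  obtain ⟨hS, hI, hIS⟩ := eig_facts hP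
  set S : ℝ := ⨆ i, hP.eigenvalues i
  set I : ℝ := ⨅ i, hP.eigenvalues i
  set m : ℝ := max k⁻¹ 1 with hmdef
  set c : ℝ := Real.sqrt (1 + k ^ 2) with hcdef
  have hc : 0 ≤ c := Real.sqrt_nonneg _
  have hm1 : (1:ℝ) ≤ m := le_max_right _ _
  have hmk' : k⁻¹ ≤ m := le_max_left _ _
  have hm0 : 0 ≤ m := le_trans zero_le_one hm1
  have hmk : 1 ≤ m * k := by
    have := mul_le_mul_of_nonneg_right hmk' hk.le
    rwa [inv_mul_cancel₀ hk.ne'] at this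
  have hc2 : c ≤ 1 + k := by
    rw [hcdef]
    have h := Real.sqrt_le_sqrt (show (1:ℝ) + k ^ 2 ≤ (1+k)^2 by nlinarith)
    rwa [Real.sqrt_sq (by linarith : (0:ℝ) ≤ 1 + k)] at h
  have h1 : 1 / k + c / k ^ 2 ≤ m * 3 / k := by
    rw [show 1 / k + c / k ^ 2 = (k + c) / k ^ 2 by field_simp,
      show m * 3 / k = (3 * (m * k)) / k ^ 2 by field_simp]
    apply div_le_div_of_nonneg_right ?_ (by positivity)
    nlinarith [mul_le_mul_of_nonneg_right hm1 hk.le]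
  have hsq : 1 ≤ Real.sqrt (S / I) := by
    rw [show (1:ℝ) = Real.sqrt 1 by rw [Real.sqrt_one]]
    exact Real.sqrt_le_sqrt ((one_le_div hI).mpr hIS)
  have hνk : 0 < ν * k := mul_pos hν0 hk
  have hfrac : 3 / k ≤ Real.sqrt (S / I) * (2 * S / (ν * k)) := by
    have e1 : 3 / k ≤ 3 / (ν * k) := by
      apply div_le_div_of_nonneg_left (by norm_num) hνk
      nlinarith
    have e2 : 3 / (ν * k) ≤ 2 * S / (ν * k) := by
      gcongr
      linarith
    have e3 : 2 * S / (ν * k) ≤ Real.sqrt (S / I) * (2 * S / (ν * k)) := by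
      apply le_mul_of_one_le_left (by positivity) hsq
    linarith
  calc M * (1 / k + c / k ^ 2) ≤ M * (m * 3 / k) := mul_le_mul_of_nonneg_left h1 hM
    _ ≤ M * (m * (Real.sqrt (S / I) * (2 * S / (ν * k)))) := by
        rw [mul_div_assoc]
        exact mul_le_mul_of_nonneg_left (mul_le_mul_of_nonneg_left hfrac hm0) hM
    _ = m * Real.sqrt (S / I) * (2 * S / (ν * k)) * M := by ring
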